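/- arXiv:1411.1028 — 2 statements merged into one kernel-verified Lean document; each statement's English description precedes it below -/
import Mathlib

section
/- Fix n ≥ 2, an index 1 ≤ i < n with j = i+1, a real number q ≠ 0, and points p₁, …, pₙ in a real inner product space E. Define p′ by p′_m = p_m for m ∉ {i, j}, p′_i = p_j, and p′_j = q·p_i + (1−q)·p_j. If the family p₁, …, pₙ is affinely independent, then the family p′₁, …, p′ₙ is affinely independent. Consequently, for q > 0, if v ∈ ℝ^{𝓔ₙ} is the edge norm vector of an affinely independent family of n points in E, then S_i · v is again the edge norm vector of an affinely independent family of n points in E, where S_i is the matrix of the standard braid generator s_{i,i+1} in the simplicial representation. -/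
/-- The index set `𝓔ₙ` of edges: pairs `(k,l)` with `k < l` in `Fin n`. -/
abbrev EdgeIdx (n : ℕ) : Type := {p : Fin n × Fin n // p.1 < p.2}

/-- The standard basis vector `e_{ab}` of `ℝ^{𝓔ₙ}`, viewed symmetrically in `a, b`
(with the convention `e_{mm} = 0`). -/
def eVec {n : ℕ} (a b : Fin n) : EdgeIdx n → ℝ :=
  fun c => if (c.1.1 = a ∧ c.1.2 = b) ∨ (c.1.1 = b ∧ c.1.2 = a) then 1 else 0

/-- The matrix `S_i` of the standard braid generator `s_{i,i+1}` (here `j = i+1`) in the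
simplicial representation (the LKB representation at `t = 1`), given row-wise. -/
def simpGenMatrix (n : ℕ) (i j : Fin n) (q : ℝ) : Matrix (EdgeIdx n) (EdgeIdx n) ℝ :=
  fun r c =>
    if r.1.1 = i ∧ r.1.2 = j then q ^ 2 * eVec i j c
    else if r.1.1 = i then eVec j r.1.2 c
    else if r.1.2 = i then eVec r.1.1 j c
    else if r.1.2 = j then
      (q ^ 2 - q) * eVec i j c + q * eVec r.1.1 i c + (1 - q) * eVec r.1.1 j c
    else if r.1.1 = j then
      (q ^ 2 - q) * eVec i j c + q * eVec i r.1.2 c + (1 - q) * eVec j r.1.2 c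
    else eVec r.1.1 r.1.2 c


/-- The edge norm vector of a labeled family of points: `v(k,l) = ‖p_k − p_l‖²`. -/
noncomputable def edgeNormVec {E : Type*} [NormedAddCommGroup E] [InnerProductSpace ℝ E]
    {n : ℕ} (p : Fin n → E) : EdgeIdx n → ℝ :=
  fun c => ‖p c.1.1 - p c.1.2‖ ^ 2


section Aux

variable {E : Type*} [NormedAddCommGroup E] [InnerProductSpace ℝ E]

lemma aindep_iff_univ {ι : Type*} [Fintype ι] {p : ι → E} :
    AffineIndependent ℝ p ↔
      ∀ w : ι → ℝ, ∑ e, w e = 0 → ∑ e, w e • p e = 0 → ∀ e, w e = 0 := by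
  rw [affineIndependent_iff_of_fintype]
  refine forall_congr' fun w => forall_congr' fun hw => ?_
  rw [Finset.univ.weightedVSub_eq_linear_combination hw]

lemma aindep_braid {n : ℕ} (i j : Fin n) (hne : i ≠ j) (q : ℝ) (hq : q ≠ 0)
    (p : Fin n → E) (h : AffineIndependent ℝ p) :
    AffineIndependent ℝ
      (fun m => if m = i then p j else if m = j then q • p i + (1 - q) • p j else p m) := by
  rw [aindep_iff_univ] at h ⊢
  intro w hw0 hwc
  set w' : Fin n → ℝ :=
    fun m => if m = i then q * w j else if m = j then w i + (1 - q) * w j else w m with hw'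
  have e1 : w' i = q * w j := by simp [hw']
  have e2 : w' j = w i + (1 - q) * w j := by simp [hw', hne.symm]
  have hsplit : ∀ f : Fin n → ℝ,
      ∑ m, f m = f i + (f j + ∑ m ∈ (Finset.univ.erase i).erase j, f m) := by
    intro f
    rw [← Finset.add_sum_erase _ f (Finset.mem_univ i),
        ← Finset.add_sum_erase _ f (Finset.mem_erase.2 ⟨hne.symm, Finset.mem_univ j⟩)]
  have hsplitE : ∀ f : Fin n → E,
      ∑ m, f m = f i + (f j + ∑ m ∈ (Finset.univ.erase i).erase j, f m) := by
    intro f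
    rw [← Finset.add_sum_erase _ f (Finset.mem_univ i),
        ← Finset.add_sum_erase _ f (Finset.mem_erase.2 ⟨hne.symm, Finset.mem_univ j⟩)]
  have hmem : ∀ m ∈ (Finset.univ.erase i).erase j, m ≠ i ∧ m ≠ j := by
    intro m hm
    rcases Finset.mem_erase.1 hm with ⟨hmj, hm'⟩
    exact ⟨(Finset.mem_erase.1 hm').1, hmj⟩
  have hw'0 : ∑ m, w' m = 0 := by
    rw [hsplit w', e1, e2]
    rw [hsplit w] at hw0
    have hrest : ∑ m ∈ (Finset.univ.erase i).erase j, w' m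
        = ∑ m ∈ (Finset.univ.erase i).erase j, w m := by
      refine Finset.sum_congr rfl fun m hm => ?_
      rcases hmem m hm with ⟨h1, h2⟩
      simp [hw', h1, h2]
    rw [hrest]
    linarith
  have hw'c : ∑ m, w' m • p m = 0 := by
    rw [hsplitE (fun m => w' m • p m)]
    rw [hsplitE (fun m => w m • (if m = i then p j else if m = j then q • p i + (1 - q) • p j else p m))] at hwc
    have hrest : ∑ m ∈ (Finset.univ.erase i).erase j, w' m • p m
        = ∑ m ∈ (Finset.univ.erase i).erase j,
            w m • (if m = i then p j else if m = j then q • p i + (1 - q) • p j else p m) := by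
      refine Finset.sum_congr rfl fun m hm => ?_
      rcases hmem m hm with ⟨h1, h2⟩
      simp [hw', h1, h2]
    rw [hrest, e1, e2]
    simp only [hne.symm, if_true, ite_true, ite_false, if_neg, if_pos, eq_self_iff_true] at hwc
    rw [← hwc]
    module
  have h0 := h w' hw'0 hw'c
  intro e
  have hwj : w j = 0 := by
    have := h0 i
    rw [e1] at this
    rcases mul_eq_zero.1 this with h' | h'
    · exact absurd h' hq
    · exact h'
  by_cases h1 : e = i
  · have := h0 j
    rw [e2, hwj] at this
    subst h1; linarith
  · by_cases h2 : e = j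
    · subst h2; exact hwj
    · have := h0 e
      simpa [hw', h1, h2] using this

lemma norm_combo_sq (a b : E) (q : ℝ) :
    ‖q • a + (1 - q) • b‖ ^ 2
      = (q ^ 2 - q) * ‖a - b‖ ^ 2 + q * ‖a‖ ^ 2 + (1 - q) * ‖b‖ ^ 2 := by
  have h : ∀ x : E, ‖x‖ ^ 2 = inner ℝ x x := fun x =>
    (real_inner_self_eq_norm_sq x).symm
  simp only [h, inner_add_left, inner_add_right, inner_sub_left, inner_sub_right,
    real_inner_smul_left, real_inner_smul_right, real_inner_comm a b]
  ring

lemma sum_eVec_mul {n : ℕ} (a b : Fin n) (hab : a < b) (v : EdgeIdx n → ℝ) :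
    ∑ c, eVec a b c * v c = v ⟨(a, b), hab⟩ := by
  rw [Fintype.sum_eq_single (⟨(a, b), hab⟩ : EdgeIdx n)]
  · simp [eVec]
  · intro c hc
    have : ¬((c.1.1 = a ∧ c.1.2 = b) ∨ (c.1.1 = b ∧ c.1.2 = a)) := by
      rintro (⟨h1, h2⟩ | ⟨h1, h2⟩)
      · exact hc (Subtype.ext (Prod.ext h1 h2))
      · exact absurd (h1 ▸ h2 ▸ c.2) (by simp [hab.not_gt, lt_asymm hab])
    simp [eVec, this]

end Aux

section Sums

lemma sum_eVec_mul1 {n : ℕ} (A : ℝ) (a b : Fin n) (hab : a < b) (v : EdgeIdx n → ℝ) :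
    ∑ c, (A * eVec a b c) * v c = A * v ⟨(a, b), hab⟩ := by
  simp only [mul_assoc, ← Finset.mul_sum, sum_eVec_mul a b hab v]

lemma sum_eVec_mul3 {n : ℕ} (A B C : ℝ) (a1 b1 a2 b2 a3 b3 : Fin n)
    (h1 : a1 < b1) (h2 : a2 < b2) (h3 : a3 < b3) (v : EdgeIdx n → ℝ) :
    ∑ c, (A * eVec a1 b1 c + B * eVec a2 b2 c + C * eVec a3 b3 c) * v c
      = A * v ⟨(a1, b1), h1⟩ + B * v ⟨(a2, b2), h2⟩ + C * v ⟨(a3, b3), h3⟩ := by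
  simp only [add_mul, Finset.sum_add_distrib, mul_assoc, ← Finset.mul_sum,
    sum_eVec_mul _ _ h1 v, sum_eVec_mul _ _ h2 v, sum_eVec_mul _ _ h3 v]

lemma sq_smul_norm {E : Type*} [NormedAddCommGroup E] [InnerProductSpace ℝ E]
    (q : ℝ) (x : E) : ‖q • x‖ ^ 2 = q ^ 2 * ‖x‖ ^ 2 := by
  rw [norm_smul]; simp [mul_pow, sq_abs]

end Sums

/-- **Braid generators preserve nondegeneracy.** With `j = i+1` and `q ≠ 0`, the action
of the standard braid generator (rescale the edge `e_{ij}` by `q`, then relabel by the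
transposition `(i j)`) sends affinely independent families to affinely independent
families; consequently, for `q > 0`, the matrix `S_i` of the simplicial representation
sends edge norm vectors of affinely independent families of `n` points in `E` to edge
norm vectors of affinely independent families of `n` points in `E`. -/
theorem braid_generator_preserves_simplices {E : Type*} [NormedAddCommGroup E]
    [InnerProductSpace ℝ E] (n : ℕ) (hn : 2 ≤ n) (i j : Fin n)
    (hij : (i : ℕ) + 1 = (j : ℕ)) (q : ℝ) (hq : q ≠ 0) (p p' : Fin n → E)
    (hp' : p' = fun m => if m = i then p j else if m = j then q • p i + (1 - q) • p j
      else p m) :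
    (AffineIndependent ℝ p → AffineIndependent ℝ p') ∧
    (0 < q → ∀ v : EdgeIdx n → ℝ,
      (∃ r : Fin n → E, AffineIndependent ℝ r ∧ v = edgeNormVec r) →
      ∃ r' : Fin n → E, AffineIndependent ℝ r' ∧
        (simpGenMatrix n i j q).mulVec v = edgeNormVec r') := by
  have hltij : i < j := by rw [Fin.lt_def]; omega
  have hne : i ≠ j := Fin.ne_of_lt hltij
  constructor
  · intro h; rw [hp']; exact aindep_braid i j hne q hq p h
  · rintro _ v ⟨r, hr, hv⟩
    subst hv
    set r' : Fin n → E :=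
      fun m => if m = i then r j else if m = j then q • r i + (1 - q) • r j else r m with hr'
    refine ⟨r', aindep_braid i j hne q hq r hr, ?_⟩
    have hri : r' i = r j := by simp [hr']
    have hrj : r' j = q • r i + (1 - q) • r j := by simp [hr', hne.symm]
    funext c
    obtain ⟨⟨k, l⟩, hkl⟩ := c
    have hklv : (k : ℕ) < (l : ℕ) := hkl
    rw [Matrix.mulVec, dotProduct]
    show (∑ c, simpGenMatrix n i j q ⟨(k, l), hkl⟩ c * edgeNormVec r c) = _
    by_cases hki : k = i
    · subst hki
      by_cases hlj : l = j
      · subst hlj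
        -- row (i,j)
        have hmat : ∀ c, simpGenMatrix n k l q ⟨(k, l), hkl⟩ c = q ^ 2 * eVec k l c := by
          intro c; simp [simpGenMatrix]
        simp only [hmat, sum_eVec_mul1 _ _ _ hkl (edgeNormVec r)]
        have hd : r' k - r' l = q • (r l - r k) := by rw [hri, hrj]; module
        simp only [edgeNormVec, hd, sq_smul_norm, norm_sub_rev (r l) (r k)]
      · -- row (i,l), l > j
        have hjl : j < l := by
          rw [Fin.lt_def]
          have h1 : (l : ℕ) ≠ (j : ℕ) := fun h => hlj (Fin.ext h)
          omega
        have hmat : ∀ c, simpGenMatrix n k j q ⟨(k, l), hkl⟩ c = eVec j l c := by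
          intro c; simp [simpGenMatrix, hlj]
        simp only [hmat, sum_eVec_mul _ _ hjl (edgeNormVec r)]
        have hl : r' l = r l := by simp [hr', hlj, (Fin.ne_of_lt hkl).symm]
        simp [edgeNormVec, hri, hl]
    · by_cases hli : l = i
      · subst hli
        -- row (k,i), k < i
        have hkj : k < j := hkl.trans hltij
        have hmat : ∀ c, simpGenMatrix n l j q ⟨(k, l), hkl⟩ c = eVec k j c := by
          intro c; simp [simpGenMatrix, Fin.ne_of_lt hkl]
        simp only [hmat, sum_eVec_mul _ _ hkj (edgeNormVec r)]
        have hk : r' k = r k := by simp [hr', Fin.ne_of_lt hkl, Fin.ne_of_lt hkj]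
        simp [edgeNormVec, hk, hri]
      · by_cases hlj : l = j
        · subst hlj
          -- row (k,j), k < i
          have hkiv : k < i := by
            rw [Fin.lt_def]
            have h1 : (k : ℕ) ≠ (i : ℕ) := fun h => hki (Fin.ext h)
            omega
          have hmat : ∀ c, simpGenMatrix n i l q ⟨(k, l), hkl⟩ c
              = (q ^ 2 - q) * eVec i l c + q * eVec k i c + (1 - q) * eVec k l c := by
            intro c; simp [simpGenMatrix, hki, (Fin.ne_of_lt hltij).symm]
          simp only [hmat,
            sum_eVec_mul3 _ _ _ _ _ _ _ _ _ hltij hkiv hkl (edgeNormVec r)]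
          have hk : r' k = r k := by simp [hr', hki, Fin.ne_of_lt hkl]
          have hd : r' k - r' l = q • (r k - r i) + (1 - q) • (r k - r l) := by
            rw [hk, hrj]; module
          simp only [edgeNormVec, hd, norm_combo_sq]
          have hab : r k - r i - (r k - r l) = r l - r i := by module
          rw [hab, norm_sub_rev (r l) (r i)]
        · by_cases hkj : k = j
          · subst hkj
            -- row (j,l), l > j
            have hil : i < l := hltij.trans hkl
            have hmat : ∀ c, simpGenMatrix n i k q ⟨(k, l), hkl⟩ c
                = (q ^ 2 - q) * eVec i k c + q * eVec i l c + (1 - q) * eVec k l c := by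
              intro c; simp [simpGenMatrix, hki, hli, (Fin.ne_of_lt hkl).symm]
            simp only [hmat,
              sum_eVec_mul3 _ _ _ _ _ _ _ _ _ hltij hil hkl (edgeNormVec r)]
            have hl : r' l = r l := by simp [hr', hli, (Fin.ne_of_lt hkl).symm]
            have hd : r' k - r' l = q • (r i - r l) + (1 - q) • (r k - r l) := by
              rw [hl, hrj]; module
            simp only [edgeNormVec, hd, norm_combo_sq]
            have hab : r i - r l - (r k - r l) = r i - r k := by module
            rw [hab]
          · -- generic row
            have hmat : ∀ c, simpGenMatrix n i j q ⟨(k, l), hkl⟩ c = eVec k l c := by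
              intro c; simp [simpGenMatrix, hki, hli, hlj, hkj]
            simp only [hmat, sum_eVec_mul _ _ hkl (edgeNormVec r)]
            have hk : r' k = r k := by simp [hr', hki, hkj]
            have hl : r' l = r l := by simp [hr', hli, hlj]
            simp [edgeNormVec, hk, hl]
end

section
/- Fix n ≥ 2, indices 1 ≤ i < j ≤ n, a real number q ≠ 0, and affinely independent points p₁, …, pₙ in a real inner product space E. Let B = {i, i+1, …, j−1}, define p̂_m = p_m + (q−1)·(p_i − p_j) for m ∈ B and p̂_m = p_m otherwise, and then define p′ by relabeling: p′_i = p̂_j = p_j, p′_j = p̂_i = q·p_i + (1−q)·p_j, and p′_m = p̂_m for m ∉ {i,j}. Then: (a) the family p′₁, …, p′ₙ is affinely independent; and (b) the edge norm vector v′ of p′ satisfies v′ = (P_{ij}·R_{ij})·v, where v is the edge norm vector of p, P_{ij} is the permutation matrix indexed by 𝓔ₙ induced by the transposition swapping i and j, and R_{ij} is the matrix given row-wise by: row (k,l) of R_{ij} is e_{kl} if k, l are both in B or both not in B, and row (k,l) is e_{kl} + (q−1)²·e_{ij} + (q−1)·(e_{kj} + e_{il}) + (1−q)·(e_{ik} +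 e_{jl}) if k ∈ B and l ∉ B (with the symmetric formula when l ∈ B and k ∉ B, and with the convention e_{mm} = 0, e_{kl} = e_{lk}). In other words, the dual generator acts on labeled euclidean simplices by relabeling the vertices and rescaling the edges, and this action is encoded by multiplication of edge norm vectors by the explicit matrix P_{ij}·R_{ij}. -/
/-- The permutation matrix `P_{ij}` describing the relabeling of edges induced by the
transposition swapping `i` and `j`. -/
def permMatrix (n : ℕ) (i j : Fin n) : Matrix (EdgeIdx n) (EdgeIdx n) ℝ :=
  fun r c => eVec (Equiv.swap i j r.1.1) (Equiv.swap i j r.1.2) c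

/-- The edge rescaling matrix `R_{ij}` of the `q`-rescaling along the edge between
vertices `i < j`, which moves the subconfigurations indexed by `B = {i,…,j−1}` and by
its complement rigidly: rows with both endpoints in `B` or both outside `B` are
`e_{kl}`, and rows with exactly one endpoint in `B` are
`e_{kl} + (q−1)²·e_{ij} + (q−1)·(e_{kj} + e_{il}) + (1−q)·(e_{ik} + e_{jl})`
for `k ∈ B`, `l ∉ B` (symmetrically if `l ∈ B`, `k ∉ B`). -/
def dualRescaleMatrix (n : ℕ) (i j : Fin n) (q : ℝ) :
    Matrix (EdgeIdx n) (EdgeIdx n) ℝ :=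
  fun r c =>
    if (i ≤ r.1.1 ∧ r.1.1 < j) ↔ (i ≤ r.1.2 ∧ r.1.2 < j) then eVec r.1.1 r.1.2 c
    else if i ≤ r.1.1 ∧ r.1.1 < j then
      eVec r.1.1 r.1.2 c + (q - 1) ^ 2 * eVec i j c
        + (q - 1) * (eVec r.1.1 j c + eVec i r.1.2 c)
        + (1 - q) * (eVec i r.1.1 c + eVec j r.1.2 c)
    else
      eVec r.1.1 r.1.2 c + (q - 1) ^ 2 * eVec i j c
        + (q - 1) * (eVec r.1.2 j c + eVec i r.1.1 c)
        + (1 - q) * (eVec i r.1.2 c + eVec j r.1.1 c)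

section Aux

lemma eVec_symm' {n : ℕ} (a b : Fin n) : eVec a b = eVec b a := by
  funext c; simp only [eVec]; congr 1; exact propext or_comm

lemma sum_eVec_pick {n : ℕ} (a b : Fin n) (hab : a < b) (f : EdgeIdx n → ℝ) :
    ∑ c, eVec a b c * f c = f ⟨(a, b), hab⟩ := by
  rw [Finset.sum_eq_single (⟨(a, b), hab⟩ : EdgeIdx n)]
  · simp [eVec]
  · rintro ⟨⟨x, y⟩, hxy⟩ - hne
    simp only [eVec, mul_eq_zero]
    left
    rw [if_neg]
    rintro (⟨rfl, rfl⟩ | ⟨rfl, rfl⟩)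
    · exact hne rfl
    · exact absurd hxy (not_lt.2 hab.le)
  · intro h; exact absurd (Finset.mem_univ _) h

lemma sum_eVec_norm {E : Type*} [NormedAddCommGroup E] [InnerProductSpace ℝ E]
    {n : ℕ} (p : Fin n → E) (a b : Fin n) :
    ∑ c : EdgeIdx n, eVec a b c * ‖p c.1.1 - p c.1.2‖ ^ 2 = ‖p a - p b‖ ^ 2 := by
  rcases lt_trichotomy a b with h | rfl | h
  · rw [sum_eVec_pick a b h]
  · have h0 : ∀ c : EdgeIdx n, eVec a a c = 0 := by
      rintro ⟨⟨x, y⟩, hxy⟩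
      simp only [eVec]
      rw [if_neg]
      rintro (⟨rfl, rfl⟩ | ⟨rfl, rfl⟩) <;> exact absurd hxy (lt_irrefl _)
    simp [h0]
  · rw [eVec_symm', sum_eVec_pick b a h, ← norm_sub_rev]

lemma normExpand {E : Type*} [NormedAddCommGroup E] [InnerProductSpace ℝ E]
    (a b c d : E) (t : ℝ) :
    ‖(a - b) + t • (c - d)‖ ^ 2 = ‖a - b‖ ^ 2 + t ^ 2 * ‖c - d‖ ^ 2
      + t * (‖a - d‖ ^ 2 + ‖b - c‖ ^ 2 - ‖a - c‖ ^ 2 - ‖b - d‖ ^ 2) := by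
  simp only [← real_inner_self_eq_norm_sq, inner_add_left, inner_add_right,
    inner_sub_left, inner_sub_right, real_inner_smul_left, real_inner_smul_right]
  ring_nf

lemma rowSum {E : Type*} [NormedAddCommGroup E] [InnerProductSpace ℝ E]
    {n : ℕ} (i j : Fin n) (q : ℝ) (p phat : Fin n → E)
    (hphat : phat = fun m => if i ≤ m ∧ m < j then p m + (q - 1) • (p i - p j) else p m)
    (r : EdgeIdx n) :
    ∑ c, dualRescaleMatrix n i j q r c * edgeNormVec p c = edgeNormVec phat r := by
  obtain ⟨⟨k, l⟩, hkl⟩ := r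
  simp only [edgeNormVec, dualRescaleMatrix]
  subst hphat
  by_cases hk : i ≤ k ∧ k < j <;> by_cases hl : i ≤ l ∧ l < j
  · have hc : ((i ≤ k ∧ k < j) ↔ (i ≤ l ∧ l < j)) := iff_of_true hk hl
    simp only [if_pos hc, sum_eVec_norm, if_pos hk, if_pos hl]
    rw [show p k + (q - 1) • (p i - p j) - (p l + (q - 1) • (p i - p j)) = p k - p l by abel]
  · have hc : ¬ ((i ≤ k ∧ k < j) ↔ (i ≤ l ∧ l < j)) := fun h => hl (h.1 hk)
    simp only [if_neg hc, if_pos hk, if_neg hl,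
      add_mul, mul_add, mul_assoc, Finset.sum_add_distrib, ← Finset.mul_sum, sum_eVec_norm]
    rw [show (p k + (q - 1) • (p i - p j)) - p l = (p k - p l) + (q - 1) • (p i - p j) by abel,
      normExpand]
    rw [norm_sub_rev (p i) (p l), norm_sub_rev (p i) (p k), norm_sub_rev (p j) (p l)]
    ring
  · have hc : ¬ ((i ≤ k ∧ k < j) ↔ (i ≤ l ∧ l < j)) := fun h => hk (h.2 hl)
    simp only [if_neg hc, if_neg hk, if_pos hl,
      add_mul, mul_add, mul_assoc, Finset.sum_add_distrib, ← Finset.mul_sum, sum_eVec_norm]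
    rw [show p k - (p l + (q - 1) • (p i - p j)) = (p k - p l) + (1 - q) • (p i - p j) by
      rw [show (1 - q : ℝ) = -(q - 1) by ring, neg_smul]; abel,
      normExpand]
    rw [norm_sub_rev (p i) (p l), norm_sub_rev (p i) (p k), norm_sub_rev (p j) (p k)]
    ring
  · have hc : ((i ≤ k ∧ k < j) ↔ (i ≤ l ∧ l < j)) := iff_of_false hk hl
    simp only [if_pos hc, sum_eVec_norm, if_neg hk, if_neg hl]

end Aux

/-- **Dual generators relabel and rescale.** Let `i < j`, `q ≠ 0`, and let `p` be an
affinely independent family. Rescale: `p̂_m = p_m + (q−1)·(p_i − p_j)` for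
`m ∈ B = {i,…,j−1}` and `p̂_m = p_m` otherwise; then relabel: `p′_i = p̂_j = p_j`,
`p′_j = p̂_i = q·p_i + (1−q)·p_j`, `p′_m = p̂_m` for `m ∉ {i,j}`. Then `p′` is affinely
independent, and its edge norm vector equals `P_{ij}·R_{ij}` applied to the edge norm
vector of `p`. -/
theorem dual_generator_relabels_and_rescales {E : Type*} [NormedAddCommGroup E]
    [InnerProductSpace ℝ E] (n : ℕ) (hn : 2 ≤ n) (i j : Fin n) (hij : i < j)
    (q : ℝ) (hq : q ≠ 0) (p phat p' : Fin n → E)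
    (hp : AffineIndependent ℝ p)
    (hphat : phat = fun m => if i ≤ m ∧ m < j then p m + (q - 1) • (p i - p j) else p m)
    (hp' : p' = fun m => if m = i then p j else if m = j then q • p i + (1 - q) • p j
      else phat m) :
    AffineIndependent ℝ p' ∧
    edgeNormVec p' =
      (permMatrix n i j * dualRescaleMatrix n i j q).mulVec (edgeNormVec p) := by
  classical
  have hij' : i ≠ j := hij.ne
  -- p' is phat relabeled by the swap
  have hcomp : p' = phat ∘ (Equiv.swap i j) := by
    funext m
    by_cases hmi : m = i
    · have hc : ¬ (i ≤ j ∧ j < j) := fun h => absurd h.2 (lt_irrefl j)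
      simp only [hp', hphat, hmi, Function.comp_apply, Equiv.swap_apply_left,
        if_pos rfl, if_true, if_neg hc]
    · by_cases hmj : m = j
      · have hBi : i ≤ i ∧ i < j := ⟨le_refl i, hij⟩
        simp only [hp', hphat, hmj, Function.comp_apply, Equiv.swap_apply_right,
          if_neg (Ne.symm hij'), if_pos rfl, if_true, if_pos hBi]
        module
      · simp only [hp', if_neg hmi, if_neg hmj, Function.comp_apply,
          Equiv.swap_apply_of_ne_of_ne hmi hmj]
  -- affine independence of phat
  have hphat_ai : AffineIndependent ℝ phat := by
    rw [affineIndependent_iff]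
    intro s w hw0 hw1
    set W : Fin n → ℝ := fun e => if e ∈ s then w e else 0 with hW
    have hWsum : ∑ e, W e = 0 := by
      rw [hW]
      rw [Finset.sum_ite_mem, Finset.univ_inter]
      exact hw0
    have hWsum1 : ∑ e, W e • phat e = 0 := by
      have h' : ∀ e, W e • phat e = if e ∈ s then w e • phat e else 0 := by
        intro e; by_cases he : e ∈ s <;> simp [hW, he]
      rw [Finset.sum_congr rfl fun e _ => h' e, Finset.sum_ite_mem, Finset.univ_inter, hw1]
    set t : ℝ := (q - 1) * ∑ e ∈ Finset.univ.filter (fun e => i ≤ e ∧ e < j), W e with ht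
    set w' : Fin n → ℝ :=
      fun e => W e + (if e = i then t else 0) - (if e = j then t else 0) with hw'
    have hw'0 : ∑ e, w' e = 0 := by
      simp only [hw', Finset.sum_sub_distrib, Finset.sum_add_distrib, hWsum,
        Finset.sum_ite_eq' Finset.univ i (fun _ => t),
        Finset.sum_ite_eq' Finset.univ j (fun _ => t), Finset.mem_univ, if_true]
      ring
    have hw'1 : ∑ e, w' e • p e = 0 := by
      have hptw : ∀ e, W e • phat e
          = W e • p e + (if i ≤ e ∧ e < j then W e else 0) • ((q - 1) • (p i - p j)) := by
        intro e
        rw [hphat]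
        by_cases he : i ≤ e ∧ e < j
        · simp [he, smul_add]
        · simp [he]
      have key : ∑ e, W e • p e + t • (p i - p j) = 0 := by
        rw [← hWsum1, Finset.sum_congr rfl fun e _ => hptw e, Finset.sum_add_distrib]
        congr 1
        rw [← Finset.sum_smul, Finset.sum_ite, Finset.sum_const_zero, add_zero,
          smul_smul, ht, mul_comm]
      calc ∑ e, w' e • p e
          = ∑ e, W e • p e + ((∑ e, (if e = i then t else 0) • p e)
              - ∑ e, (if e = j then t else 0) • p e) := by
            simp only [hw', sub_smul, add_smul, Finset.sum_sub_distrib,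
              Finset.sum_add_distrib]
            abel
        _ = ∑ e, W e • p e + (t • p i - t • p j) := by
            congr 1
            have h1 : ∑ e, (if e = i then t else 0) • p e
                = ∑ e, (if e = i then t • p e else 0) := by
              refine Finset.sum_congr rfl fun e _ => ?_
              by_cases he : e = i <;> simp [he]
            have h2 : ∑ e, (if e = j then t else 0) • p e
                = ∑ e, (if e = j then t • p e else 0) := by
              refine Finset.sum_congr rfl fun e _ => ?_
              by_cases he : e = j <;> simp [he]
            rw [h1, h2, Finset.sum_ite_eq' Finset.univ i (fun e => t • p e),
              Finset.sum_ite_eq' Finset.univ j (fun e => t • p e)]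
            simp
        _ = 0 := by rw [← smul_sub, key]
    have hzero : ∀ e, w' e = 0 :=
      fun e => (affineIndependent_iff.1 hp) Finset.univ w' hw'0 hw'1 e (Finset.mem_univ e)
    have hWi : W i = -t := by
      have h3 := hzero i
      rw [hw'] at h3
      simp only [if_pos rfl, if_true, if_neg hij', sub_zero] at h3
      linarith [h3]
    have hWoff : ∀ e, e ≠ i → e ≠ j → W e = 0 := by
      intro e hei hej
      have h3 := hzero e
      rw [hw'] at h3
      simp only [if_neg hei, if_neg hej, add_zero, sub_zero] at h3
      exact h3
    have hsumB : ∑ e ∈ Finset.univ.filter (fun e => i ≤ e ∧ e < j), W e = -t := by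
      rw [show (∑ e ∈ Finset.univ.filter (fun e => i ≤ e ∧ e < j), W e)
          = ∑ e ∈ Finset.univ.filter (fun e => i ≤ e ∧ e < j),
              (if e = i then -t else 0) from Finset.sum_congr rfl fun e he => by
        by_cases hei : e = i
        · subst hei; simp [hWi]
        · have hej : e ≠ j := by
            intro hejj
            rw [hejj] at he
            exact absurd (Finset.mem_filter.1 he).2.2 (lt_irrefl j)
          simp [hei, hWoff e hei hej]]
      rw [Finset.sum_ite_eq' _ i (fun _ => -t), if_pos]
      simp [Finset.mem_filter, le_refl, hij]
    have htz : t = 0 := by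
      rw [hsumB] at ht
      have hqt : q * t = 0 := by linear_combination ht
      rcases mul_eq_zero.1 hqt with h | h
      · exact absurd h hq
      · exact h
    intro e he
    have hWe : W e = w e := by simp [hW, he]
    by_cases hei : e = i
    · rw [← hWe, hei, hWi, htz, neg_zero]
    · by_cases hej : e = j
      · have h3 := hzero e
        rw [hw'] at h3
        simp only [hej, if_neg (Ne.symm hij'), if_pos rfl, if_true, add_zero] at h3
        rw [← hWe, hej]
        linarith [h3, htz]
      · rw [← hWe]; exact hWoff e hei hej
  constructor
  · rw [hcomp]
    exact hphat_ai.comp_embedding (Equiv.swap i j).toEmbedding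
  · funext r
    obtain ⟨⟨k, l⟩, hkl⟩ := r
    rw [← Matrix.mulVec_mulVec]
    have hR : (dualRescaleMatrix n i j q).mulVec (edgeNormVec p) = edgeNormVec phat := by
      funext b
      exact rowSum i j q p phat hphat b
    rw [hR]
    have hPrw : ((permMatrix n i j).mulVec (edgeNormVec phat)) ⟨(k, l), hkl⟩
        = ∑ c, eVec (Equiv.swap i j k) (Equiv.swap i j l) c * edgeNormVec phat c := rfl
    rw [hPrw]
    have := sum_eVec_norm phat (Equiv.swap i j k) (Equiv.swap i j l)
    simp only [edgeNormVec] at this ⊢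
    rw [this, hcomp]
    rfl
end
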